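/- Let U ⊆ ℂ be open, let A : U → M_m(ℂ) be analytic, and let z_0 ∈ U. Define row-vector-valued functions b_k(z) := e_1ᵀ A(z)^k for k ≥ 0, set b̃_0 := 0 and b̃_{k+1}(z) := b̃_k(z)·A(z) + b_k′(z), and let B(z), B̃(z) be the m×m matrices whose rows are b_0,…,b_{m−1} and b̃_0,…,b̃_{m−1} respectively. Let α_1(z),…,α_m(z) be the coefficients of the characteristic polynomial det(w·I − A(z)) = w^m + α_1(z) w^{m−1} + ⋯ + α_m(z) and let T(z) be the companion matrix with T_{i,i+1} = 1 for i < m and last row (−α_m(z),…,−α_1(z)). If B(z_0) is invertible, then at z = z_0: b̃_m B^{−1} − b_m B^{−1} B̃ B^{−1} = ∑_{k=1}^m e_kᵀ · B′ B^{−1} · ( T^{m−k} + α_1 T^{m−k−1} + ⋯ + α_{m−k}·I ). -/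

import Mathlib

open Matrix

attribute [local instance] Matrix.normedAddCommGroup Matrix.normedSpace

lemma aux_sum_vecMul {ι n p : Type*} [Fintype n] (s : Finset ι) (v : ι → n → ℂ)
    (M : Matrix n p ℂ) : (∑ i ∈ s, v i) ᵥ* M = ∑ i ∈ s, v i ᵥ* M := by
  induction s using Finset.cons_induction with
  | empty => simp
  | cons a s ha ih => simp [Matrix.add_vecMul, ih]

lemma aux_vecMul_sum {ι n p : Type*} [Fintype n] (s : Finset ι) (v : n → ℂ)
    (M : ι → Matrix n p ℂ) : v ᵥ* (∑ i ∈ s, M i) = ∑ i ∈ s, v ᵥ* M i := by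
  induction s using Finset.cons_induction with
  | empty => simp
  | cons a s ha ih => simp [Matrix.vecMul_add, ih]

lemma aux_vecMul_smul {n p : Type*} [Fintype n] (v : n → ℂ) (c : ℂ)
    (M : Matrix n p ℂ) : v ᵥ* (c • M) = c • (v ᵥ* M) := by
  funext j
  simp only [Matrix.vecMul, dotProduct, Matrix.smul_apply, Pi.smul_apply, smul_eq_mul,
    Finset.mul_sum]
  exact Finset.sum_congr rfl fun i _ => by ring

lemma aux_CH (m : ℕ) (M : Matrix (Fin m) (Fin m) ℂ) :
    M ^ m = -∑ i ∈ Finset.range m, M.charpoly.coeff i • M ^ i := by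
  have h0 := Matrix.aeval_self_charpoly M
  rw [Polynomial.aeval_eq_sum_range] at h0
  have hdeg : M.charpoly.natDegree = m := by
    rw [Matrix.charpoly_natDegree_eq_dim, Fintype.card_fin]
  rw [hdeg, Finset.sum_range_succ] at h0
  have hcm : M.charpoly.coeff m = 1 := by
    have := M.charpoly_monic
    rw [Polynomial.Monic.def, Polynomial.leadingCoeff, hdeg] at this
    exact this
  rw [hcm, one_smul] at h0
  linear_combination (norm := abel) h0

lemma aux_coeff_card (m : ℕ) (M : Matrix (Fin m) (Fin m) ℂ) :
    M.charpoly.coeff m = 1 := by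
  have hdeg : M.charpoly.natDegree = m := by
    rw [Matrix.charpoly_natDegree_eq_dim, Fintype.card_fin]
  have := M.charpoly_monic
  rw [Polynomial.Monic.def, Polynomial.leadingCoeff, hdeg] at this
  exact this

/-- The first-order (in ε) term of the coefficients of the scalar reduction of the family
`ε dΦ/dz = A(z)Φ`: at a point `z₀` where `B(z₀)` is invertible,
`b̃_m B⁻¹ − b_m B⁻¹ B̃ B⁻¹ = ∑ₖ e_kᵀ B′B⁻¹ (T^{m−k} + α₁ T^{m−k−1} + ⋯ + α_{m−k} I)`. -/
theorem stmt_16 (m : ℕ) (hm : 0 < m) (U : Set ℂ) (hU : IsOpen U)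
    (A : ℂ → Matrix (Fin m) (Fin m) ℂ) (hA : AnalyticOnNhd ℂ A U)
    (b : ℕ → ℂ → Fin m → ℂ)
    (hb : ∀ k z, b k z = fun j => (A z ^ k) ⟨0, hm⟩ j)
    (btil : ℕ → ℂ → Fin m → ℂ)
    (hbt0 : ∀ z, btil 0 z = 0)
    (hbts : ∀ k z, btil (k + 1) z = Matrix.vecMul (btil k z) (A z) + deriv (b k) z)
    (B Btil : ℂ → Matrix (Fin m) (Fin m) ℂ)
    (hB : ∀ z, B z = Matrix.of fun k j : Fin m => b (k : ℕ) z j)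
    (hBt : ∀ z, Btil z = Matrix.of fun k j : Fin m => btil (k : ℕ) z j)
    (α : ℕ → ℂ → ℂ) (hα : ∀ i z, α i z = (A z).charpoly.coeff (m - i))
    (T : ℂ → Matrix (Fin m) (Fin m) ℂ)
    (hT : ∀ z, T z = Matrix.of fun i j : Fin m =>
      if (i : ℕ) + 1 = m then -α (m - (j : ℕ)) z
      else if (j : ℕ) = (i : ℕ) + 1 then 1 else 0)
    (z₀ : ℂ) (hz₀ : z₀ ∈ U) (hdet : IsUnit (B z₀).det) :
    Matrix.vecMul (btil m z₀) (B z₀)⁻¹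
      - Matrix.vecMul (b m z₀) ((B z₀)⁻¹ * Btil z₀ * (B z₀)⁻¹)
    = ∑ k : Fin m, Matrix.vecMul (Pi.single k 1)
        ((Matrix.of fun i j : Fin m => deriv (fun w => B w i j) z₀) * (B z₀)⁻¹ *
          ∑ i ∈ Finset.range (m - (k : ℕ)),
            (if i = 0 then (1 : ℂ) else α i z₀) • T z₀ ^ (m - 1 - (k : ℕ) - i)) := by
  -- notation
  set c : ℕ → ℂ := fun i => (A z₀).charpoly.coeff i with hc
  have hBB : B z₀ * (B z₀)⁻¹ = 1 := Matrix.mul_nonsing_inv _ hdet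
  have hBBl : (B z₀)⁻¹ * B z₀ = 1 := Matrix.nonsing_inv_mul _ hdet
  -- differentiability of entries
  have hAd : DifferentiableAt ℂ A z₀ := (hA z₀ hz₀).differentiableAt
  have hpow : ∀ k (i j : Fin m), DifferentiableAt ℂ (fun z => (A z ^ k) i j) z₀ := by
    intro k
    induction k with
    | zero => simpa using fun i j =>
        (differentiableAt_const ((1 : Matrix (Fin m) (Fin m) ℂ) i j))
    | succ k ih =>
      intro i j
      have hrw : (fun z => (A z ^ (k+1)) i j) = fun z => ∑ l, (A z ^ k) i l * A z l j := by
        funext z; rw [pow_succ, Matrix.mul_apply]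
      rw [hrw]
      exact DifferentiableAt.fun_sum fun l _ => (ih i l).mul
        (((Matrix.entryLinearMap ℂ ℂ l j).toContinuousLinearMap.differentiableAt).comp z₀ hAd)
  have hbdiff : ∀ k (j : Fin m), DifferentiableAt ℂ (fun z => b k z j) z₀ := by
    intro k j
    have : (fun z => b k z j) = fun z => (A z ^ k) ⟨0, hm⟩ j := by
      funext z; rw [hb]
    rw [this]; exact hpow k _ j
  have hder : ∀ k, deriv (b k) z₀ = fun j => deriv (fun z => b k z j) z₀ := fun k =>
    deriv_pi (fun j => hbdiff k j)
  -- Cayley–Hamilton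
  have hCH : A z₀ ^ m = -∑ i ∈ Finset.range m, c i • A z₀ ^ i := aux_CH m (A z₀)
  have hcm : c m = 1 := aux_coeff_card m (A z₀)
  -- companion relation
  have hTB : T z₀ * B z₀ = B z₀ * A z₀ := by
    ext k j
    rw [Matrix.mul_apply, Matrix.mul_apply]
    have hRHS : ∑ l, B z₀ k l * A z₀ l j = (A z₀ ^ ((k : ℕ) + 1)) ⟨0, hm⟩ j := by
      rw [pow_succ, Matrix.mul_apply]
      refine Finset.sum_congr rfl fun l _ => ?_
      rw [hB]; simp only [Matrix.of_apply]; rw [hb]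
    rw [hRHS]
    by_cases hk : (k : ℕ) + 1 = m
    · have hL : ∀ l : Fin m, T z₀ k l * B z₀ l j = -(c (l : ℕ) * (A z₀ ^ (l : ℕ)) ⟨0, hm⟩ j) := by
        intro l
        rw [hT, hB]
        simp only [Matrix.of_apply, if_pos hk]
        rw [hα, Nat.sub_sub_self (le_of_lt l.isLt), hb, hc, neg_mul]
      rw [Finset.sum_congr rfl fun l _ => hL l, Finset.sum_neg_distrib]
      rw [hk, hCH]
      simp only [Matrix.neg_apply, Matrix.sum_apply, Matrix.smul_apply, smul_eq_mul]
      rw [← Fin.sum_univ_eq_sum_range (fun i => c i * (A z₀ ^ i) ⟨0, hm⟩ j) m]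
    · have hlt : (k : ℕ) + 1 < m := by have := k.isLt; omega
      have hL : ∀ l : Fin m, T z₀ k l * B z₀ l j
          = (if l = (⟨(k : ℕ) + 1, hlt⟩ : Fin m) then 1 else 0) * B z₀ l j := by
        intro l
        rw [hT]
        simp only [Matrix.of_apply, if_neg hk]
        congr 1
        simp [Fin.ext_iff]
      rw [Finset.sum_congr rfl fun l _ => hL l]
      simp only [ite_mul, one_mul, zero_mul, Finset.sum_ite_eq', Finset.mem_univ, if_pos]
      rw [hB]
      simp only [Matrix.of_apply]
      rw [hb]
  have hTBn : ∀ n : ℕ, T z₀ ^ n * B z₀ = B z₀ * A z₀ ^ n := by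
    intro n
    induction n with
    | zero => simp
    | succ n ih =>
      rw [pow_succ, pow_succ, Matrix.mul_assoc, hTB, ← Matrix.mul_assoc, ih, Matrix.mul_assoc]
  have hABi : ∀ n : ℕ, A z₀ ^ n * (B z₀)⁻¹ = (B z₀)⁻¹ * T z₀ ^ n := by
    intro n
    have h1 : (B z₀)⁻¹ * (B z₀ * A z₀ ^ n) * (B z₀)⁻¹ = A z₀ ^ n * (B z₀)⁻¹ := by
      rw [← Matrix.mul_assoc, hBBl, Matrix.one_mul]
    have h2 : (B z₀)⁻¹ * (T z₀ ^ n * B z₀) * (B z₀)⁻¹ = (B z₀)⁻¹ * T z₀ ^ n := by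
      rw [← Matrix.mul_assoc, Matrix.mul_assoc ((B z₀)⁻¹ * T z₀ ^ n) (B z₀) (B z₀)⁻¹,
        hBB, Matrix.mul_one]
    rw [← h1, ← hTBn, h2]
  -- closed form for btil at z₀
  have hbtilc : ∀ k : ℕ, btil k z₀
      = ∑ j ∈ Finset.range k, deriv (b j) z₀ ᵥ* A z₀ ^ (k - 1 - j) := by
    intro k
    induction k with
    | zero => rw [hbt0]; simp
    | succ k ih =>
      rw [hbts, ih, aux_sum_vecMul, Finset.sum_range_succ]
      congr 1
      · refine Finset.sum_congr rfl fun j hj => ?_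
        rw [Matrix.vecMul_vecMul, ← pow_succ]
        have hj' := Finset.mem_range.mp hj
        have he : k - 1 - j + 1 = k + 1 - 1 - j := by omega
        rw [he]
      · simp
  -- rows of Btil * B⁻¹
  have hrow : ∀ l : ℕ, btil l z₀ ᵥ* (B z₀)⁻¹
      = ∑ j ∈ Finset.range l, deriv (b j) z₀ ᵥ* ((B z₀)⁻¹ * T z₀ ^ (l - 1 - j)) := by
    intro l
    rw [hbtilc, aux_sum_vecMul]
    refine Finset.sum_congr rfl fun j _ => ?_
    rw [Matrix.vecMul_vecMul, hABi]
  -- b m as combination of rows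
  have hbmrow : b m z₀ = -∑ l ∈ Finset.range m, c l • b l z₀ := by
    funext j
    simp only [hb]
    rw [hCH]
    simp [Matrix.neg_apply, Matrix.sum_apply, Matrix.smul_apply, smul_eq_mul]
  have hblB : ∀ lf : Fin m, b (lf : ℕ) z₀ ᵥ* ((B z₀)⁻¹ * Btil z₀ * (B z₀)⁻¹)
      = btil (lf : ℕ) z₀ ᵥ* (B z₀)⁻¹ := by
    intro lf
    have h1 : b (lf : ℕ) z₀ = Pi.single lf 1 ᵥ* B z₀ := by
      funext j
      rw [Matrix.single_one_vecMul, hB]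
      rfl
    have h2 : B z₀ * ((B z₀)⁻¹ * Btil z₀ * (B z₀)⁻¹) = Btil z₀ * (B z₀)⁻¹ := by
      simp only [← Matrix.mul_assoc]
      rw [hBB, Matrix.one_mul]
    rw [h1, Matrix.vecMul_vecMul, h2, ← Matrix.vecMul_vecMul, Matrix.single_one_vecMul, hBt]
    rfl
  have hB'row : ∀ k : Fin m,
      (Matrix.of fun i j : Fin m => deriv (fun w => B w i j) z₀) k = deriv (b (k : ℕ)) z₀ := by
    intro k
    funext j
    have h1 : (fun w => B w k j) = fun w => b (k : ℕ) w j := by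
      funext w; rw [hB]; rfl
    show deriv (fun w => B w k j) z₀ = deriv (b (k : ℕ)) z₀ j
    rw [hder, h1]
  -- RHS summand
  have hRk : ∀ k : Fin m, Pi.single k 1 ᵥ*
      ((Matrix.of fun i j : Fin m => deriv (fun w => B w i j) z₀) * (B z₀)⁻¹ *
        ∑ i ∈ Finset.range (m - (k : ℕ)),
          (if i = 0 then (1 : ℂ) else α i z₀) • T z₀ ^ (m - 1 - (k : ℕ) - i))
      = ∑ i ∈ Finset.range (m - (k : ℕ)),
          c (m - i) • (deriv (b (k : ℕ)) z₀ ᵥ* ((B z₀)⁻¹ * T z₀ ^ (m - 1 - (k : ℕ) - i))) := by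
    intro k
    rw [← Matrix.vecMul_vecMul, ← Matrix.vecMul_vecMul, Matrix.single_one_vecMul, Matrix.row, hB'row,
      aux_vecMul_sum]
    refine Finset.sum_congr rfl fun i hi => ?_
    rw [aux_vecMul_smul, Matrix.vecMul_vecMul]
    congr 1
    by_cases h0 : i = 0
    · subst h0; simp [hcm]
    · rw [if_neg h0, hα]
  -- rewrite both sides
  rw [hrow m, hbmrow, Matrix.neg_vecMul, aux_sum_vecMul, sub_neg_eq_add,
    Finset.sum_congr rfl (fun k _ => hRk k),
    Fin.sum_univ_eq_sum_range (fun k => ∑ i ∈ Finset.range (m - k),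
      c (m - i) • (deriv (b k) z₀ ᵥ* ((B z₀)⁻¹ * T z₀ ^ (m - 1 - k - i)))) m]
  have hsecond : ∀ l ∈ Finset.range m, (c l • b l z₀) ᵥ* ((B z₀)⁻¹ * Btil z₀ * (B z₀)⁻¹)
      = c l • ∑ j ∈ Finset.range l, deriv (b j) z₀ ᵥ* ((B z₀)⁻¹ * T z₀ ^ (l - 1 - j)) := by
    intro l hl
    have hlm := Finset.mem_range.mp hl
    rw [Matrix.smul_vecMul, hblB ⟨l, hlm⟩, hrow l]
  rw [Finset.sum_congr rfl hsecond]
  -- split off the i = 0 term on the RHS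
  have hsplit : ∀ k ∈ Finset.range m, ∑ i ∈ Finset.range (m - k),
        c (m - i) • (deriv (b k) z₀ ᵥ* ((B z₀)⁻¹ * T z₀ ^ (m - 1 - k - i)))
      = deriv (b k) z₀ ᵥ* ((B z₀)⁻¹ * T z₀ ^ (m - 1 - k))
        + ∑ i ∈ Finset.Ico 1 (m - k),
            c (m - i) • (deriv (b k) z₀ ᵥ* ((B z₀)⁻¹ * T z₀ ^ (m - 1 - k - i))) := by
    intro k hk
    have hkm := Finset.mem_range.mp hk
    rw [Finset.range_eq_Ico, Finset.sum_eq_sum_Ico_succ_bot (by omega : 0 < m - k)]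
    simp only [Nat.sub_zero, hcm, one_smul]
  rw [Finset.sum_congr rfl hsplit, Finset.sum_add_distrib]
  congr 1
  -- reindex the remaining double sum
  have hre : ∀ k ∈ Finset.range m, ∑ i ∈ Finset.Ico 1 (m - k),
        c (m - i) • (deriv (b k) z₀ ᵥ* ((B z₀)⁻¹ * T z₀ ^ (m - 1 - k - i)))
      = ∑ l ∈ Finset.Ico (k + 1) m,
        c l • (deriv (b k) z₀ ᵥ* ((B z₀)⁻¹ * T z₀ ^ (l - 1 - k))) := by
    intro k hk
    have hkm := Finset.mem_range.mp hk
    refine Finset.sum_nbij' (fun i => m - i) (fun l => m - l) ?_ ?_ ?_ ?_ ?_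
    · intro i hi; simp only [Finset.mem_Ico] at *; omega
    · intro l hl; simp only [Finset.mem_Ico] at *; omega
    · intro i hi; simp only [Finset.mem_Ico] at hi; omega
    · intro l hl; simp only [Finset.mem_Ico] at hl; omega
    · intro i hi
      simp only [Finset.mem_Ico] at hi
      have h2 : m - i - 1 - k = m - 1 - k - i := by omega
      rw [h2]
  rw [Finset.sum_congr rfl hre]
  have hL : ∀ l ∈ Finset.range m,
      c l • ∑ j ∈ Finset.range l, deriv (b j) z₀ ᵥ* ((B z₀)⁻¹ * T z₀ ^ (l - 1 - j))
      = ∑ j ∈ Finset.range l, c l • (deriv (b j) z₀ ᵥ* ((B z₀)⁻¹ * T z₀ ^ (l - 1 - j))) :=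
    fun l _ => Finset.smul_sum
  rw [Finset.sum_congr rfl hL, Finset.range_eq_Ico]
  simp only [Finset.range_eq_Ico]
  exact (Finset.sum_Ico_Ico_comm' 0 m
    (fun i j => c j • (deriv (b i) z₀ ᵥ* ((B z₀)⁻¹ * T z₀ ^ (j - 1 - i))))).symm
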